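/- Let p > 1 and let f be holomorphic on U^n with ‖f‖_p < ∞. Then for every z ∈ U^n, |f(z)| ≤ (1/n + 2^{p−1}/(p−1)) · (Σ_{k=1}^n 1/(1−|z_k|²)^{p−1}) · ‖f‖_p. -/

import Mathlib

open Metric Set Filter

noncomputable section

def polydisc (n : ℕ) : Set (Fin n → ℂ) := {z | ∀ j, ‖z j‖ < 1}

def blochSum (n : ℕ) (p : ℝ) (f : (Fin n → ℂ) → ℂ) (z : Fin n → ℂ) : ℝ :=
  ∑ k : Fin n, ‖fderiv ℂ f z (Pi.single k 1)‖ * (1 - ‖z k‖ ^ 2) ^ p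

def blochNorm (n : ℕ) (p : ℝ) (f : (Fin n → ℂ) → ℂ) : ℝ :=
  ‖f 0‖ + sSup (blochSum n p f '' polydisc n)

def MemBloch (n : ℕ) (p : ℝ) (f : (Fin n → ℂ) → ℂ) : Prop :=
  DifferentiableOn ℂ f (polydisc n) ∧ BddAbove (blochSum n p f '' polydisc n)

def IsPolyFn (n : ℕ) (g : (Fin n → ℂ) → ℂ) : Prop :=
  ∃ P : MvPolynomial (Fin n) ℂ, ∀ z, g z = MvPolynomial.eval z P

def MemLittleBloch (n : ℕ) (p : ℝ) (f : (Fin n → ℂ) → ℂ) : Prop :=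
  MemBloch n p f ∧ ∀ ε : ℝ, 0 < ε →
    ∃ g, IsPolyFn n g ∧ blochNorm n p (fun z => f z - g z) < ε

def MemLittleStarBloch (n : ℕ) (p : ℝ) (f : (Fin n → ℂ) → ℂ) : Prop :=
  MemBloch n p f ∧ ∀ z : ℕ → Fin n → ℂ, (∀ j, z j ∈ polydisc n) →
    (∀ k, Tendsto (fun j => ‖z j k‖) atTop (nhds 1)) →
    Tendsto (fun j => blochSum n p f (z j)) atTop (nhds 0)

def HoloSelfMap (n : ℕ) (φ : (Fin n → ℂ) → Fin n → ℂ) : Prop :=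
  DifferentiableOn ℂ φ (polydisc n) ∧ ∀ z ∈ polydisc n, φ z ∈ polydisc n

def compSum (n : ℕ) (p q : ℝ) (φ : (Fin n → ℂ) → Fin n → ℂ) (z : Fin n → ℂ) : ℝ :=
  ∑ k : Fin n, ∑ l : Fin n, ‖fderiv ℂ φ z (Pi.single k 1) l‖ *
    ((1 - ‖z k‖ ^ 2) ^ q / (1 - ‖φ z l‖ ^ 2) ^ p)

lemma polydisc_isOpen (n : ℕ) : IsOpen (polydisc n) := by
  have h : polydisc n = ⋂ j, (fun z : Fin n → ℂ => z j) ⁻¹' (Metric.ball (0:ℂ) 1) := by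
    ext z
    simp [polydisc, Complex.dist_eq, mem_ball]
  rw [h]
  exact isOpen_iInter_of_finite fun j => (Metric.isOpen_ball).preimage (continuous_apply j)

/-- Lemma 1 (3): growth estimate for functions in the p-Bloch space, p > 1. -/
theorem bloch_growth_gt_one (n : ℕ) (hn : 0 < n) (p : ℝ) (hp : 1 < p)
    (f : (Fin n → ℂ) → ℂ) (hf : MemBloch n p f) :
    ∀ z ∈ polydisc n,
      ‖f z‖ ≤ (1 / (n : ℝ) + (2 : ℝ) ^ (p - 1) / (p - 1)) *
        (∑ k : Fin n, 1 / (1 - ‖z k‖ ^ 2) ^ (p - 1)) * blochNorm n p f := by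
  intro z hz
  have hopen := polydisc_isOpen n
  set C := sSup (blochSum n p f '' polydisc n) with hCdef
  have h0mem : (0 : Fin n → ℂ) ∈ polydisc n := fun j => by simp
  have hCle : ∀ w ∈ polydisc n, blochSum n p f w ≤ C :=
    fun w hw => le_csSup hf.2 ⟨w, hw, rfl⟩
  have hC0 : 0 ≤ C := by
    refine le_trans ?_ (hCle 0 h0mem)
    refine Finset.sum_nonneg fun k _ => mul_nonneg (norm_nonneg _) ?_
    exact Real.rpow_nonneg (by simp) _
  have hp1 : (0:ℝ) < p - 1 := by linarith
  have hppos : (0:ℝ) < p := by linarith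
  -- pointwise derivative bound
  have key : ∀ w ∈ polydisc n, ∀ k : Fin n,
      ‖fderiv ℂ f w (Pi.single k 1)‖ ≤ C / (1 - ‖w k‖ ^ 2) ^ p := by
    intro w hw k
    have hb : (0:ℝ) < 1 - ‖w k‖ ^ 2 := by
      have := hw k
      nlinarith [norm_nonneg (w k)]
    have hd : (0:ℝ) < (1 - ‖w k‖ ^ 2) ^ p := Real.rpow_pos_of_pos hb p
    rw [le_div_iff₀ hd]
    refine le_trans ?_ (hCle w hw)
    refine Finset.single_le_sum (f := fun j => ‖fderiv ℂ f w (Pi.single j 1)‖ *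
      (1 - ‖w j‖ ^ 2) ^ p) ?_ (Finset.mem_univ k)
    intro j _
    have hbj : (0:ℝ) < 1 - ‖w j‖ ^ 2 := by
      have := hw j
      nlinarith [norm_nonneg (w j)]
    exact mul_nonneg (norm_nonneg _) (Real.rpow_pos_of_pos hbj p).le
  set r : Fin n → ℝ := fun k => ‖z k‖ with hrdef
  have hr0 : ∀ k, 0 ≤ r k := fun k => norm_nonneg _
  have hr1 : ∀ k, r k < 1 := fun k => hz k
  -- base positivity along segment
  have hbase : ∀ t ∈ Icc (0:ℝ) 1, ∀ k, 0 < 1 - t * r k := by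
    intro t ht k
    have : t * r k ≤ r k := mul_le_of_le_one_left (hr0 k) ht.2
    linarith [hr1 k]
  -- the boundary function
  set B : ℝ → ℝ := fun t => (C / (p - 1)) * ∑ k : Fin n, ((1 - t * r k) ^ (1 - p) - 1) with hBdef
  set B' : ℝ → ℝ := fun t => ∑ k : Fin n, r k * (C / (1 - t * r k) ^ p) with hB'def
  have hBderiv : ∀ t ∈ Icc (0:ℝ) 1, HasDerivAt B (B' t) t := by
    intro t ht
    have hsum : HasDerivAt (fun t => ∑ k : Fin n, ((1 - t * r k) ^ (1 - p) - 1))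
        (∑ k : Fin n, (p - 1) * r k * (1 - t * r k) ^ (-p)) t := by
      refine HasDerivAt.fun_sum fun k _ => ?_
      have h1 : HasDerivAt (fun t : ℝ => 1 - t * r k) (-(r k)) t := by
        simpa using ((hasDerivAt_id t).mul_const (r k)).const_sub 1
      have h2 := Real.hasDerivAt_rpow_const (x := 1 - t * r k) (p := 1 - p)
        (Or.inl (hbase t ht k).ne')
      have h3 := h2.comp t h1
      have heq : (1 - p) * (1 - t * r k) ^ (1 - p - 1) * -(r k)
          = (p - 1) * r k * (1 - t * r k) ^ (-p) := by
        have : (1 : ℝ) - p - 1 = -p := by ring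
        rw [this]; ring
      rw [heq] at h3
      exact h3.sub_const 1
    have h4 := hsum.const_mul (C / (p - 1))
    refine h4.congr_deriv ?_
    symm
    rw [Finset.mul_sum]
    refine Finset.sum_congr rfl fun k _ => ?_
    rw [Real.rpow_neg (hbase t ht k).le]
    have hx : ((1 - t * r k) ^ p) ≠ 0 := (Real.rpow_pos_of_pos (hbase t ht k) p).ne'
    have hne : p - 1 ≠ 0 := hp1.ne'
    field_simp
  -- the segment stays in the polydisc
  have hseg : ∀ t ∈ Icc (0:ℝ) 1, t • z ∈ polydisc n := by
    intro t ht k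
    have habs : ‖(t • z) k‖ = |t| * r k := by
      show ‖t • z k‖ = _
      rw [norm_smul, Real.norm_eq_abs]
    rw [habs, abs_of_nonneg ht.1]
    calc t * r k ≤ r k := mul_le_of_le_one_left (hr0 k) ht.2
    _ < 1 := hr1 k
  have hg : ∀ t ∈ Icc (0:ℝ) 1,
      HasDerivAt (fun t : ℝ => f (t • z) - f 0) (fderiv ℂ f (t • z) z) t := by
    intro t ht
    have hline : HasDerivAt (fun t : ℝ => t • z) z t := by
      simpa using (hasDerivAt_id t).smul_const z
    have hdf : HasFDerivAt f (fderiv ℂ f (t • z)) (t • z) :=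
      (hf.1.differentiableAt (hopen.mem_nhds (hseg t ht))).hasFDerivAt
    have := (hdf.restrictScalars ℝ).comp_hasDerivAt t hline
    exact this.sub_const (f 0)
  -- the bound on the derivative
  have hbound : ∀ t ∈ Ico (0:ℝ) 1, ‖fderiv ℂ f (t • z) z‖ ≤ B' t := by
    intro t ht
    have ht' : t ∈ Icc (0:ℝ) 1 := ⟨ht.1, ht.2.le⟩
    set L := fderiv ℂ f (t • z) with hLdef
    have hzdecomp : z = ∑ k : Fin n, z k • (Pi.single k 1 : Fin n → ℂ) := by
      conv_lhs => rw [← Finset.univ_sum_single z]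
      refine Finset.sum_congr rfl fun k _ => ?_
      rw [← Pi.single_smul, smul_eq_mul, mul_one]
    have hLz : L z = ∑ k : Fin n, z k • L (Pi.single k 1) := by
      conv_lhs => rw [hzdecomp]
      rw [map_sum]
      exact Finset.sum_congr rfl fun k _ => by rw [map_smul]
    calc ‖L z‖ = ‖∑ k : Fin n, (z k) • L (Pi.single k 1)‖ := by rw [hLz]
    _ ≤ ∑ k : Fin n, ‖(z k) • L (Pi.single k 1)‖ := norm_sum_le _ _
    _ = ∑ k : Fin n, r k * ‖L (Pi.single k 1)‖ := by
          refine Finset.sum_congr rfl fun k _ => ?_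
          rw [norm_smul]
    _ ≤ B' t := by
          refine Finset.sum_le_sum fun k _ => ?_
          refine mul_le_mul_of_nonneg_left ?_ (hr0 k)
          have h1 := key (t • z) (hseg t ht') k
          have habs : ‖(t • z) k‖ = t * r k := by
            show ‖t • z k‖ = _
            rw [norm_smul, Real.norm_eq_abs,
              abs_of_nonneg ht.1]
          rw [habs] at h1
          refine h1.trans ?_
          have htr0 : 0 ≤ t * r k := mul_nonneg ht.1 (hr0 k)
          have htr1 : t * r k < 1 := by
            calc t * r k ≤ r k := mul_le_of_le_one_left (hr0 k) ht.2.le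
            _ < 1 := hr1 k
          have hle : (1 - t * r k) ^ p ≤ (1 - (t * r k) ^ 2) ^ p := by
            refine Real.rpow_le_rpow (hbase t ht' k).le ?_ hppos.le
            nlinarith
          have hpos1 : (0:ℝ) < (1 - t * r k) ^ p := Real.rpow_pos_of_pos (hbase t ht' k) p
          exact div_le_div_of_nonneg_left hC0 hpos1 hle
  -- apply the mean value inequality
  have hB0 : B 0 = 0 := by
    simp [hBdef, Real.one_rpow]
  have main : ‖f ((1:ℝ) • z) - f 0‖ ≤ B 1 := by
    have := image_norm_le_of_norm_deriv_right_le_deriv_boundary'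
      (f := fun t : ℝ => f (t • z) - f 0) (a := 0) (b := 1)
      (f' := fun t => fderiv ℂ f (t • z) z)
      (fun t ht => (hg t ht).continuousAt.continuousWithinAt)
      (fun t ht => (hg t ⟨ht.1, ht.2.le⟩).hasDerivWithinAt)
      (B := B) (B' := B')
      (by simp [hB0, zero_smul])
      (fun t ht => (hBderiv t ht).continuousAt.continuousWithinAt)
      (fun t ht => (hBderiv t ⟨ht.1, ht.2.le⟩).hasDerivWithinAt)
      hbound
    exact this (by norm_num : (1:ℝ) ∈ Icc (0:ℝ) 1)
  rw [one_smul] at main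
  -- final arithmetic
  set S := ∑ k : Fin n, 1 / (1 - ‖z k‖ ^ 2) ^ (p - 1) with hSdef
  have hb2 : ∀ k, (0:ℝ) < 1 - r k ^ 2 := by
    intro k
    nlinarith [hr0 k, hr1 k]
  have hterm : ∀ k : Fin n, (1 - r k) ^ (1 - p) - 1 ≤
      (2:ℝ) ^ (p - 1) * (1 / (1 - r k ^ 2) ^ (p - 1)) := by
    intro k
    have h1k : (0:ℝ) < 1 - r k := by linarith [hr1 k]
    have ha : (0:ℝ) < (1 - r k) ^ (p - 1) := Real.rpow_pos_of_pos h1k _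
    have hbpos : (0:ℝ) < (1 - r k ^ 2) ^ (p - 1) := Real.rpow_pos_of_pos (hb2 k) _
    have hcomp : (1 - r k ^ 2) ^ (p - 1) ≤ (2:ℝ) ^ (p - 1) * (1 - r k) ^ (p - 1) := by
      rw [← Real.mul_rpow (by norm_num) h1k.le]
      refine Real.rpow_le_rpow (hb2 k).le ?_ hp1.le
      nlinarith [hr0 k]
    have heq : (1 - r k) ^ (1 - p) = ((1 - r k) ^ (p - 1))⁻¹ := by
      rw [show (1:ℝ) - p = -(p - 1) by ring, Real.rpow_neg h1k.le]
    rw [heq]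
    have hfin : ((1 - r k) ^ (p - 1))⁻¹ ≤ (2:ℝ) ^ (p - 1) * (1 / (1 - r k ^ 2) ^ (p - 1)) := by
      rw [mul_one_div, le_div_iff₀ hbpos]
      calc ((1 - r k) ^ (p - 1))⁻¹ * (1 - r k ^ 2) ^ (p - 1)
          ≤ ((1 - r k) ^ (p - 1))⁻¹ * ((2:ℝ) ^ (p - 1) * (1 - r k) ^ (p - 1)) :=
            mul_le_mul_of_nonneg_left hcomp (inv_nonneg.2 ha.le)
      _ = (2:ℝ) ^ (p - 1) := by field_simp
    linarith
  have hB1 : B 1 ≤ (C / (p - 1)) * ((2:ℝ) ^ (p - 1) * S) := by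
    have hsum : ∑ k : Fin n, ((1 - 1 * r k) ^ (1 - p) - 1) ≤ (2:ℝ) ^ (p - 1) * S := by
      rw [hSdef, Finset.mul_sum]
      refine Finset.sum_le_sum fun k _ => ?_
      rw [one_mul]
      exact hterm k
    exact mul_le_mul_of_nonneg_left hsum (div_nonneg hC0 hp1.le)
  have hS1 : (n:ℝ) ≤ S := by
    rw [hSdef]
    calc (n:ℝ) = ∑ _k : Fin n, (1:ℝ) := by simp
    _ ≤ _ := by
        refine Finset.sum_le_sum fun k _ => ?_
        have hbpos : (0:ℝ) < (1 - ‖z k‖ ^ 2) ^ (p - 1) :=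
          Real.rpow_pos_of_pos (hb2 k) _
        rw [le_div_iff₀ hbpos, one_mul]
        refine Real.rpow_le_one (hb2 k).le ?_ hp1.le
        nlinarith [hr0 k]
  have hF0 : (0:ℝ) ≤ ‖f 0‖ := norm_nonneg _
  have htri : ‖f z‖ ≤ ‖f 0‖ + ‖f z - f 0‖ := by
    calc ‖f z‖ = ‖f 0 + (f z - f 0)‖ := by ring_nf
    _ ≤ _ := by
        exact norm_add_le _ _
  have hchain : ‖f z‖ ≤ ‖f 0‖ +
      ((2:ℝ) ^ (p - 1) / (p - 1)) * S * C := by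
    have h1 : ‖f z - f 0‖ ≤ (C / (p - 1)) * ((2:ℝ) ^ (p - 1) * S) := main.trans hB1
    have h2 : (C / (p - 1)) * ((2:ℝ) ^ (p - 1) * S) = ((2:ℝ) ^ (p - 1) / (p - 1)) * S * C := by
      field_simp
    linarith [htri]
  show ‖f z‖ ≤ (1 / (n:ℝ) + (2:ℝ) ^ (p - 1) / (p - 1)) * S * blochNorm n p f
  have hbn : blochNorm n p f = ‖f 0‖ + C := rfl
  rw [hbn]
  set A := (2:ℝ) ^ (p - 1) / (p - 1) with hAdef
  have hA0 : 0 ≤ A := div_nonneg (Real.rpow_nonneg (by norm_num) _) hp1.le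
  have hnpos : (0:ℝ) < n := Nat.cast_pos.2 hn
  have hSn : (1:ℝ) ≤ (1 / (n:ℝ)) * S := by
    rw [div_mul_eq_mul_div, one_mul, le_div_iff₀ hnpos]
    linarith [hS1]
  have hSpos : (0:ℝ) < S := lt_of_lt_of_le hnpos hS1
  refine hchain.trans ?_
  nlinarith [mul_le_mul_of_nonneg_right hSn hF0,
    mul_nonneg (mul_nonneg (one_div_nonneg.2 hnpos.le) hSpos.le) hC0,
    mul_nonneg (mul_nonneg hA0 hSpos.le) hF0]
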